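/- Let F be a field and m, p ≥ 1 integers. Consider the set of polynomials Ω_2 = { x^{smp+kp+p−1+t} − x^{kmp+sp+p−1−t} : k, s ∈ {0,...,m−1}, t ∈ {1,...,p−1} } ⊆ F[x]. Then the dimension over F of the linear span of Ω_2 equals ((p−1)(2m^2−m+1) − χ(m)·χ(p))/2, where χ(x) = 1 if x is even and 0 if x is odd. -/

import Mathlib

open Polynomial

/-- `χ(x) = 1` if `x` is even, `0` if `x` is odd. -/
def chi (x : ℕ) : ℕ := if Even x then 1 else 0

/-- The generating set Ω₂. -/
def Om (F : Type*) [Field F] (m p : ℕ) : Set (Polynomial F) :=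
  { q : Polynomial F | ∃ k s : Fin m, ∃ t : ℕ, 1 ≤ t ∧ t ≤ p - 1 ∧
      q = (X : Polynomial F) ^ ((s : ℕ) * (m * p) + (k : ℕ) * p + (p - 1) + t)
          - (X : Polynomial F) ^ ((k : ℕ) * (m * p) + (s : ℕ) * p + (p - 1 - t)) }

/-- `a` and `b` are connected: `X^a - X^b` lies in the span of Ω₂. -/
def SR (F : Type*) [Field F] (m p : ℕ) (a b : ℕ) : Prop :=
  (X : Polynomial F) ^ a - X ^ b ∈ Submodule.span F (Om F m p)

/-- involution on `[0,m]`: `c ↦ (1 - c) mod (m+1)`. -/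
def iot (m c : ℕ) : ℕ := (m + 2 - c) % (m + 1)

/-- representative of the connected component of the exponent `n`. -/
def rep (m p n : ℕ) : ℕ :=
  min ((n / p % (m + 1)) * p + n % p)
      (iot m (n / p % (m + 1)) * p + (p - 2 - n % p))

section Lemmas

lemma nmod_eq {a b q r : ℕ} (h : a = b * q + r) (hr : r < b) : a % b = r := by
  subst h; rw [Nat.mul_add_mod, Nat.mod_eq_of_lt hr]

lemma ndiv_eq {a b q r : ℕ} (h : a = b * q + r) (hr : r < b) : a / b = q := by
  subst h
  rw [Nat.mul_add_div (by omega : 0 < b), Nat.div_eq_of_lt hr, Nat.add_zero]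

lemma iot_le (m c : ℕ) : iot m c ≤ m :=
  Nat.lt_succ_iff.mp (Nat.mod_lt _ (by omega))

lemma iot_invol {m c : ℕ} (hm : 1 ≤ m) (hc : c ≤ m) : iot m (iot m c) = c := by
  unfold iot
  rcases Nat.lt_or_ge c 2 with h | h
  · interval_cases c
    · have e1 : (m + 2 - 0) % (m + 1) = 1 := nmod_eq (q := 1) (by omega) (by omega)
      rw [e1]
      exact nmod_eq (q := 1) (by omega) (by omega)
    · have e1 : (m + 2 - 1) % (m + 1) = 0 := nmod_eq (q := 1) (by omega) (by omega)
      rw [e1]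
      exact nmod_eq (q := 1) (by omega) (by omega)
  · have e1 : (m + 2 - c) % (m + 1) = m + 2 - c :=
      Nat.mod_eq_of_lt (by omega)
    rw [e1, Nat.mod_eq_of_lt (by omega : m + 2 - (m + 2 - c) < m + 1)]
    omega

lemma iot_eq_self_iff {m c : ℕ} (hm : 1 ≤ m) (hc : c ≤ m) :
    iot m c = c ↔ 2 * c = m + 2 := by
  unfold iot
  rcases Nat.lt_or_ge c 2 with h | h
  · interval_cases c
    · rw [nmod_eq (q := 1) (r := 1) (by omega) (by omega)]; omega
    · rw [nmod_eq (q := 1) (r := 0) (by omega) (by omega)]; omega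
  · rw [Nat.mod_eq_of_lt (by omega : m + 2 - c < m + 1)]; omega

variable {F : Type*} [Field F] {m p : ℕ}

lemma SR_refl (a : ℕ) : SR F m p a a := by
  unfold SR; rw [sub_self]; exact Submodule.zero_mem _

lemma SR_symm {a b : ℕ} (h : SR F m p a b) : SR F m p b a := by
  unfold SR at *
  have : (X : Polynomial F) ^ b - X ^ a = -((X : Polynomial F) ^ a - X ^ b) := by ring
  rw [this]; exact Submodule.neg_mem _ h

lemma SR_trans {a b c : ℕ} (h1 : SR F m p a b) (h2 : SR F m p b c) : SR F m p a c := by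
  unfold SR at *
  have : (X : Polynomial F) ^ a - X ^ c =
      ((X : Polynomial F) ^ a - X ^ b) + ((X : Polynomial F) ^ b - X ^ c) := by ring
  rw [this]; exact Submodule.add_mem _ h1 h2

/-- the basic edges, in (quotient, residue) coordinates. -/
lemma SR_edge (hp : 2 ≤ p) {s k t : ℕ} (hs : s < m) (hk : k < m)
    (ht1 : 1 ≤ t) (ht2 : t ≤ p - 1) :
    SR F m p ((s * m + k + 1) * p + (t - 1)) ((k * m + s) * p + (p - 1 - t)) := by
  unfold SR
  apply Submodule.subset_span
  refine ⟨⟨k, hk⟩, ⟨s, hs⟩, t, ht1, ht2, ?_⟩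
  have h1 : (s * m + k + 1) * p + (t - 1) = s * (m * p) + k * p + (p - 1) + t := by
    obtain ⟨t', rfl⟩ : ∃ t', t = t' + 1 := ⟨t - 1, by omega⟩
    obtain ⟨p', rfl⟩ : ∃ p', p = p' + 2 := ⟨p - 2, by omega⟩
    simp only [Nat.add_sub_cancel]
    ring_nf
    omega
  have h2 : (k * m + s) * p + (p - 1 - t) = k * (m * p) + s * p + (p - 1 - t) := by ring
  rw [h1, h2]

end Lemmas

section Connect

variable {F : Type*} [Field F] {m p : ℕ}

set_option maxHeartbeats 1000000

lemma msq {m : ℕ} (hm : 1 ≤ m) : (m - 1) * m + m = m ^ 2 := by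
  obtain ⟨m', rfl⟩ : ∃ m', m = m' + 1 := ⟨m - 1, by omega⟩
  simp only [Nat.add_sub_cancel]
  have h1 : m' * (m' + 1) = m' ^ 2 + m' := by ring
  have h2 : (m' + 1) ^ 2 = m' ^ 2 + 2 * m' + 1 := by ring
  omega

/-- two consecutive edges: climb the quotient by `m+1`. -/
lemma SR_step (hp : 2 ≤ p) {s k r : ℕ} (hs : s + 1 < m) (hk : k < m) (hr : r ≤ p - 2) :
    SR F m p ((s * m + k + (m + 1)) * p + r) ((s * m + k) * p + r) := by
  have h1 : SR F m p ((k * m + s + 1) * p + (p - 1 - r - 1)) ((s * m + k) * p + (p - 1 - (p - 1 - r))) :=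
    SR_edge hp (s := k) (k := s) (t := p - 1 - r) (by omega) (by omega) (by omega) (by omega)
  have h2 : SR F m p (((s + 1) * m + k + 1) * p + (r + 1 - 1))
      ((k * m + (s + 1)) * p + (p - 1 - (r + 1))) :=
    SR_edge hp (s := s + 1) (k := k) (t := r + 1) hs hk (by omega) (by omega)
  have e0 : p - 1 - r - 1 = p - 2 - r := by omega
  rw [e0] at h1
  have e1 : p - 1 - (p - 1 - r) = r := by omega
  have e2 : (s + 1) * m + k + 1 = s * m + k + (m + 1) := by
    have : (s + 1) * m = s * m + m := by ring
    omega
  have e3 : k * m + (s + 1) = k * m + s + 1 := by omega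
  have e4 : r + 1 - 1 = r := by omega
  have e5 : p - 1 - (r + 1) = p - 2 - r := by omega
  rw [e1] at h1
  rw [e2, e3, e4, e5] at h2
  exact SR_trans h2 h1

/-- chains of steps. -/
lemma SR_chain (hm : 1 ≤ m) (hp : 2 ≤ p) (j : ℕ) {q r : ℕ}
    (hq : q + j * (m + 1) ≤ m ^ 2) (hr : r ≤ p - 2) :
    SR F m p ((q + j * (m + 1)) * p + r) (q * p + r) := by
  induction j with
  | zero => simpa using SR_refl _
  | succ j ih =>
    have hjj : (j + 1) * (m + 1) = j * (m + 1) + (m + 1) := by ring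
    have hq' : q + j * (m + 1) ≤ m ^ 2 := by omega
    refine SR_trans ?_ (ih hq')
    set q' := q + j * (m + 1) with hq'def
    have hq'' : q' + (m + 1) ≤ m ^ 2 := by omega
    -- digits of q'
    have hk : q' % m < m := Nat.mod_lt _ (by omega)
    have hdm : q' = (q' / m) * m + q' % m := by
      have h0 := Nat.div_add_mod q' m
      have h1 : m * (q' / m) = (q' / m) * m := Nat.mul_comm _ _
      omega
    have hs : q' / m + 1 < m := by
      by_contra hcon
      push_neg at hcon
      have h2 : (m - 1) * m ≤ (q' / m) * m := Nat.mul_le_mul_right m (by omega)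
      have h3 := msq hm
      omega
    have := SR_step (F := F) hp (s := q' / m) (k := q' % m) (r := r) hs hk hr
    rw [← hdm] at this
    have e : q + (j + 1) * (m + 1) = q' + (m + 1) := by omega
    rw [e]
    exact this

lemma SR_to_class (hm : 1 ≤ m) (hp : 2 ≤ p) {q r : ℕ} (hq : q ≤ m ^ 2) (hr : r ≤ p - 2) :
    SR F m p (q * p + r) ((q % (m + 1)) * p + r) := by
  have h0 := Nat.div_add_mod q (m + 1)
  have h1 : (m + 1) * (q / (m + 1)) = (q / (m + 1)) * (m + 1) := Nat.mul_comm _ _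
  have h : q % (m + 1) + q / (m + 1) * (m + 1) = q := by omega
  have := SR_chain (F := F) hm hp (q / (m + 1)) (q := q % (m + 1)) (r := r) (by omega) hr
  rwa [h] at this

/-- single edge from a class representative: flips residue and applies `iot`. -/
lemma SR_flip (hm : 1 ≤ m) (hp : 2 ≤ p) {c r : ℕ} (hc : c ≤ m) (hr : r ≤ p - 2) :
    SR F m p (c * p + r) (iot m c * p + (p - 2 - r)) := by
  rcases Nat.lt_or_ge c m with hcm | hcm
  · -- c ≤ m - 1 : edge (c*m+1, p-2-r) — (c, r), then chain down
    have h1 : SR F m p ((c * m + 0 + 1) * p + (p - 1 - r - 1)) ((0 * m + c) * p + (p - 1 - (p - 1 - r))) :=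
      SR_edge hp (s := c) (k := 0) (t := p - 1 - r) hcm (by omega) (by omega) (by omega)
    have e1 : p - 1 - (p - 1 - r) = r := by omega
    have e2 : p - 1 - r - 1 = p - 2 - r := by omega
    rw [e1, e2] at h1
    simp only [Nat.zero_mul, Nat.zero_add, Nat.add_zero] at h1
    have hcm1 : c * m + 1 ≤ m ^ 2 := by
      have h2 : c * m ≤ (m - 1) * m := Nat.mul_le_mul_right m (by omega)
      have h3 := msq hm
      omega
    have h2 : SR F m p ((c * m + 1) * p + (p - 2 - r)) (((c * m + 1) % (m + 1)) * p + (p - 2 - r)) :=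
      SR_to_class hm hp hcm1 (by omega)
    have e3 : (c * m + 1) % (m + 1) = iot m c := by
      unfold iot
      rcases Nat.lt_or_ge c 2 with h | h
      · interval_cases c
        · rw [nmod_eq (a := 0 * m + 1) (q := 0) (r := 1) (by omega) (by omega),
            nmod_eq (q := 1) (r := 1) (by omega) (by omega)]
        · rw [nmod_eq (a := 1 * m + 1) (q := 1) (r := 0) (by omega) (by omega),
            nmod_eq (q := 1) (r := 0) (by omega) (by omega)]
      · obtain ⟨e, rfl⟩ : ∃ e, c = e + 2 := ⟨c - 2, by omega⟩
        obtain ⟨g, rfl⟩ : ∃ g, m = e + g + 3 := ⟨m - e - 3, by omega⟩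
        have key : (e + 2) * (e + g + 3) + 1 = (e + g + 3 + 1) * (e + 1) + (g + 3) := by ring
        rw [nmod_eq key (by omega), Nat.mod_eq_of_lt (by omega)]
        omega
    rw [e3] at h2
    exact SR_trans (SR_symm h1) h2
  · -- c = m
    have hceq : c = m := by omega
    rw [hceq]
    rcases Nat.lt_or_ge m 2 with hm1 | hm2
    · -- m = 1, c = 1
      have hm1' : m = 1 := by omega
      have h1 : SR F m p ((0 * m + 0 + 1) * p + (r + 1 - 1)) ((0 * m + 0) * p + (p - 1 - (r + 1))) :=
        SR_edge hp (s := 0) (k := 0) (t := r + 1) (by omega) (by omega) (by omega) (by omega)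
      have e1 : 0 * m + 0 + 1 = m := by omega
      have e2 : 0 * m + 0 = iot m m := by
        have : iot m m = 0 := by
          unfold iot
          exact nmod_eq (q := 1) (r := 0) (by omega) (by omega)
        omega
      have e3 : r + 1 - 1 = r := by omega
      have e4 : p - 1 - (r + 1) = p - 2 - r := by omega
      rw [e1, e2, e3, e4] at h1
      exact h1
    · -- m ≥ 2 : edge (2, p-2-r) — (m, r)
      have h1 : SR F m p ((0 * m + 1 + 1) * p + (p - 1 - r - 1)) ((1 * m + 0) * p + (p - 1 - (p - 1 - r))) :=
        SR_edge hp (s := 0) (k := 1) (t := p - 1 - r) (by omega) (by omega) (by omega) (by omega)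
      have e1 : p - 1 - (p - 1 - r) = r := by omega
      have e2 : p - 1 - r - 1 = p - 2 - r := by omega
      have e3 : (0 * m + 1 + 1) = 2 := by omega
      have e4 : (1 * m + 0) = m := by omega
      rw [e1, e2, e3, e4] at h1
      have e5 : iot m m = 2 := by
        unfold iot
        rw [Nat.mod_eq_of_lt (by omega : m + 2 - m < m + 1)]
        omega
      rw [e5]
      exact SR_symm h1

end Connect

section Rep

variable {F : Type*} [Field F] {m p : ℕ}

lemma key_mod {s k : ℕ} (hm : 1 ≤ m) (hs : s < m) (hk : k < m) :
    (s * m + k + 1) % (m + 1) = iot m ((k * m + s) % (m + 1)) := by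
  have ha : (s * m + k + 1) % (m + 1) < m + 1 := Nat.mod_lt _ (by omega)
  have hb : (k * m + s) % (m + 1) < m + 1 := Nat.mod_lt _ (by omega)
  set a := (s * m + k + 1) % (m + 1) with hadef
  set b := (k * m + s) % (m + 1) with hbdef
  have hsum : (a + b) % (m + 1) = 1 := by
    rw [hadef, hbdef, ← Nat.add_mod]
    have hA : s * m + k + 1 + (k * m + s) = (m + 1) * (s + k) + 1 := by ring
    rw [hA, Nat.mul_add_mod, Nat.mod_eq_of_lt (by omega)]
  have hcases : a + b = 1 ∨ a + b = m + 2 := by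
    rcases Nat.lt_or_ge (a + b) (m + 1) with h | h
    · left; rwa [Nat.mod_eq_of_lt h] at hsum
    · right
      rw [Nat.mod_eq_sub_mod h, Nat.mod_eq_of_lt (by omega)] at hsum
      omega
  unfold iot
  rcases hcases with h | h
  · rcases (by omega : b = 0 ∧ a = 1 ∨ b = 1 ∧ a = 0) with ⟨h1, h2⟩ | ⟨h1, h2⟩
    · rw [h1, h2]; exact (nmod_eq (a := m + 2 - 0) (b := m + 1) (q := 1) (r := 1) (by omega) (by omega)).symm
    · rw [h1, h2]; exact (nmod_eq (a := m + 2 - 1) (b := m + 1) (q := 1) (r := 0) (by omega) (by omega)).symm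
  · rw [Nat.mod_eq_of_lt (by omega : m + 2 - b < m + 1)]
    omega

lemma rep_eval {q r : ℕ} (hr : r < p) :
    rep m p (q * p + r) =
      min ((q % (m + 1)) * p + r) (iot m (q % (m + 1)) * p + (p - 2 - r)) := by
  unfold rep
  rw [ndiv_eq (q := q) (r := r) (by ring) hr, nmod_eq (q := q) (r := r) (by ring) hr]

lemma rep_edge (hm : 1 ≤ m) (hp : 2 ≤ p) {s k t : ℕ} (hs : s < m) (hk : k < m)
    (ht1 : 1 ≤ t) (ht2 : t ≤ p - 1) :
    rep m p ((s * m + k + 1) * p + (t - 1)) = rep m p ((k * m + s) * p + (p - 1 - t)) := by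
  rw [rep_eval (by omega), rep_eval (by omega)]
  set ca := (s * m + k + 1) % (m + 1) with hcadef
  set cb := (k * m + s) % (m + 1) with hcbdef
  have hcb : cb ≤ m := Nat.lt_succ_iff.mp (Nat.mod_lt _ (by omega))
  have h1 : ca = iot m cb := key_mod hm hs hk
  have h2 : iot m ca = cb := by rw [h1, iot_invol hm hcb]
  have e1 : p - 2 - (t - 1) = p - 1 - t := by omega
  have e2 : p - 2 - (p - 1 - t) = t - 1 := by omega
  rw [h2, h1, e1, e2, Nat.min_comm]

lemma rep_idem (hm : 1 ≤ m) (hp : 2 ≤ p) {q r : ℕ} (hr : r ≤ p - 2) :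
    rep m p (rep m p (q * p + r)) = rep m p (q * p + r) := by
  rw [rep_eval (by omega)]
  set c := q % (m + 1) with hcdef
  have hc : c ≤ m := Nat.lt_succ_iff.mp (Nat.mod_lt _ (by omega))
  have hcm : c % (m + 1) = c := Nat.mod_eq_of_lt (by omega)
  have hicm : iot m c % (m + 1) = iot m c := Nat.mod_eq_of_lt (Nat.lt_succ_of_le (iot_le m c))
  rcases le_total ((c * p + r)) (iot m c * p + (p - 2 - r)) with h | h
  · rw [min_eq_left h, rep_eval (by omega), hcm, min_eq_left h]
  · rw [min_eq_right h, rep_eval (by omega), hicm, iot_invol hm hc,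
      (by omega : p - 2 - (p - 2 - r) = r), min_eq_left h]

lemma rep_connect (hm : 1 ≤ m) (hp : 2 ≤ p) {q r : ℕ} (hq : q ≤ m ^ 2) (hr : r ≤ p - 2) :
    SR F m p (q * p + r) (rep m p (q * p + r)) := by
  rw [rep_eval (by omega)]
  have hc : q % (m + 1) ≤ m := Nat.lt_succ_iff.mp (Nat.mod_lt _ (by omega))
  rcases le_total ((q % (m + 1)) * p + r) (iot m (q % (m + 1)) * p + (p - 2 - r)) with h | h
  · rw [min_eq_left h]; exact SR_to_class hm hp hq hr
  · rw [min_eq_right h]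
    exact SR_trans (SR_to_class hm hp hq hr) (SR_flip hm hp hc hr)

end Rep

section Count

lemma enc_inj {p c r c' r' : ℕ} (hr : r < p) (hr' : r' < p) (h : c * p + r = c' * p + r') :
    c = c' ∧ r = r' := by
  have h1 : (c * p + r) / p = c := ndiv_eq (q := c) (r := r) (by ring) hr
  have h2 : (c' * p + r') / p = c' := ndiv_eq (q := c') (r := r') (by ring) hr'
  have h3 : (c * p + r) % p = r := nmod_eq (q := c) (r := r) (by ring) hr
  have h4 : (c' * p + r') % p = r' := nmod_eq (q := c') (r := r') (by ring) hr'
  rw [h] at h1 h3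
  omega

lemma chi_mul_le_one (m p : ℕ) : chi m * chi p ≤ 1 := by
  unfold chi
  split <;> split <;> omega

def flp (m p : ℕ) (cr : ℕ × ℕ) : ℕ × ℕ := (iot m cr.1, p - 2 - cr.2)

def encp (p : ℕ) (cr : ℕ × ℕ) : ℕ := cr.1 * p + cr.2

lemma chi_even {x : ℕ} (h : Even x) : chi x = 1 := by simp [chi, h]

lemma chi_odd {x : ℕ} (h : ¬ Even x) : chi x = 0 := by simp [chi, h]

lemma count_min (m p : ℕ) (hm : 1 ≤ m) (hp : 2 ≤ p) :
    2 * ((Finset.range (m + 1) ×ˢ Finset.range (p - 1)).filter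
        (fun cr => encp p cr ≤ encp p (flp m p cr))).card
    = (m + 1) * (p - 1) + chi m * chi p := by
  classical
  set T := Finset.range (m + 1) ×ˢ Finset.range (p - 1) with hT
  have hmemT : ∀ cr : ℕ × ℕ, cr ∈ T ↔ cr.1 ≤ m ∧ cr.2 ≤ p - 2 := by
    intro cr
    simp only [hT, Finset.mem_product, Finset.mem_range]
    omega
  have hioT : ∀ cr ∈ T, flp m p cr ∈ T := by
    intro cr hcr
    rw [hmemT] at *
    exact ⟨iot_le m cr.1, by simp only [flp]; omega⟩
  have hinv : ∀ cr ∈ T, flp m p (flp m p cr) = cr := by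
    intro cr hcr
    rw [hmemT] at hcr
    have h1 := iot_invol hm hcr.1
    simp only [flp]
    ext
    · exact h1
    · simp only; omega
  set Cmin := T.filter (fun cr => encp p cr ≤ encp p (flp m p cr)) with hCmin
  set CminS := T.filter (fun cr => encp p cr < encp p (flp m p cr)) with hCminS
  set Eqq := T.filter (fun cr => encp p cr = encp p (flp m p cr)) with hEqq
  set Cmax := T.filter (fun cr => ¬ encp p cr ≤ encp p (flp m p cr)) with hCmax
  have h1 : Cmin.card + Cmax.card = T.card :=
    Finset.card_filter_add_card_filter_not _
  have h2 : CminS.card + Eqq.card = Cmin.card := by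
    have e1 : Cmin.filter (fun cr => encp p cr < encp p (flp m p cr)) = CminS := by
      rw [hCmin, hCminS, Finset.filter_filter]
      apply Finset.filter_congr
      intro x _
      constructor
      · rintro ⟨_, h⟩; exact h
      · intro h; exact ⟨le_of_lt h, h⟩
    have e2 : Cmin.filter (fun cr => ¬ encp p cr < encp p (flp m p cr)) = Eqq := by
      rw [hCmin, hEqq, Finset.filter_filter]
      apply Finset.filter_congr
      intro x _
      constructor
      · rintro ⟨ha, hb⟩; omega
      · intro h; omega
    rw [← e1, ← e2]
    exact Finset.card_filter_add_card_filter_not _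
  have h3 : Cmax.card = CminS.card := by
    apply Finset.card_nbij' (flp m p) (flp m p)
    · intro a ha
      rw [hCmax, Finset.mem_coe, Finset.mem_filter] at ha
      rw [hCminS, Finset.mem_coe, Finset.mem_filter]
      refine ⟨hioT a ha.1, ?_⟩
      rw [hinv a ha.1]
      omega
    · intro a ha
      rw [hCminS, Finset.mem_coe, Finset.mem_filter] at ha
      rw [hCmax, Finset.mem_coe, Finset.mem_filter]
      refine ⟨hioT a ha.1, ?_⟩
      rw [hinv a ha.1]
      omega
    · intro a ha
      rw [hCmax, Finset.mem_coe, Finset.mem_filter] at ha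
      exact hinv a ha.1
    · intro a ha
      rw [hCminS, Finset.mem_coe, Finset.mem_filter] at ha
      exact hinv a ha.1
  have h4 : Eqq.card = chi m * chi p := by
    have echar : Eqq = T.filter (fun cr => 2 * cr.1 = m + 2 ∧ 2 * cr.2 = p - 2) := by
      rw [hEqq]
      apply Finset.filter_congr
      intro x hx
      rw [hmemT] at hx
      simp only [encp, flp]
      constructor
      · intro h
        obtain ⟨hc, hr⟩ := enc_inj (p := p) (by omega) (by omega) h
        have := (iot_eq_self_iff hm hx.1).mp hc.symm
        omega
      · intro h
        have hic : iot m x.1 = x.1 := (iot_eq_self_iff hm hx.1).mpr (by omega)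
        simp only [hic]
        omega
    rw [echar]
    rcases Nat.even_or_odd m with hme | hmo
    · rcases Nat.even_or_odd p with hpe | hpo
      · have hsingle : T.filter (fun cr => 2 * cr.1 = m + 2 ∧ 2 * cr.2 = p - 2)
            = {((m + 2) / 2, (p - 2) / 2)} := by
          apply Finset.ext
          intro x
          rw [Finset.mem_filter, hmemT, Finset.mem_singleton]
          obtain ⟨m', rfl⟩ := hme
          obtain ⟨p', rfl⟩ := hpe
          constructor
          · rintro ⟨-, h1', h2'⟩
            have hx : x = (x.1, x.2) := rfl
            rw [hx]
            have e1 : x.1 = (m' + m' + 2) / 2 := by omega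
            have e2 : x.2 = (p' + p' - 2) / 2 := by omega
            rw [e1, e2]
          · intro h
            rw [h]
            refine ⟨⟨by omega, by omega⟩, by omega, by omega⟩
        rw [hsingle, Finset.card_singleton, chi_even hme, chi_even hpe]
      · have hemp : T.filter (fun cr => 2 * cr.1 = m + 2 ∧ 2 * cr.2 = p - 2) = ∅ := by
          apply Finset.filter_false_of_mem
          intro x hx
          rw [Nat.odd_iff] at hpo
          omega
        rw [hemp, Finset.card_empty]
        simp [chi_odd (Nat.not_even_iff_odd.mpr hpo)]
    · have hemp : T.filter (fun cr => 2 * cr.1 = m + 2 ∧ 2 * cr.2 = p - 2) = ∅ := by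
        apply Finset.filter_false_of_mem
        intro x hx
        rw [Nat.odd_iff] at hmo
        omega
      rw [hemp, Finset.card_empty]
      simp [chi_odd (Nat.not_even_iff_odd.mpr hmo)]
  have h5 : T.card = (m + 1) * (p - 1) := by
    rw [hT, Finset.card_product, Finset.card_range, Finset.card_range]
  omega

end Count

section Main

lemma expA {m p s k t : ℕ} (hp : 2 ≤ p) (ht1 : 1 ≤ t) (ht2 : t ≤ p - 1) :
    s * (m * p) + k * p + (p - 1) + t = (s * m + k + 1) * p + (t - 1) := by
  obtain ⟨t', rfl⟩ : ∃ t', t = t' + 1 := ⟨t - 1, by omega⟩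
  obtain ⟨p', rfl⟩ : ∃ p', p = p' + 2 := ⟨p - 2, by omega⟩
  simp only [Nat.add_sub_cancel]
  have e : (p' + 2) - 1 = p' + 1 := by omega
  rw [e]
  ring

lemma expB {m p s k t : ℕ} :
    k * (m * p) + s * p + (p - 1 - t) = (k * m + s) * p + (p - 1 - t) := by
  have e : k * (m * p) + s * p = (k * m + s) * p := by ring
  omega

lemma quot_le {m s k : ℕ} (hs : s < m) (hk : k < m) : s * m + k + 1 ≤ m ^ 2 := by
  have h1 : s * m ≤ (m - 1) * m := Nat.mul_le_mul_right m (by omega)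
  have h2 := msq (show 1 ≤ m by omega)
  omega

lemma mem_V_iff {m p : ℕ} (hp : 2 ≤ p) (n : ℕ) :
    n ∈ (Finset.range (m ^ 2 + 1) ×ˢ Finset.range (p - 1)).image (encp p) ↔
      ∃ q r, q ≤ m ^ 2 ∧ r ≤ p - 2 ∧ n = q * p + r := by
  simp only [Finset.mem_image, Finset.mem_product, Finset.mem_range, encp]
  constructor
  · rintro ⟨⟨q, r⟩, ⟨hq, hr⟩, rfl⟩
    exact ⟨q, r, by omega, by omega, rfl⟩
  · rintro ⟨q, r, hq, hr, rfl⟩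
    exact ⟨⟨q, r⟩, ⟨by omega, by omega⟩, rfl⟩

theorem stmt_10' (F : Type*) [Field F] (m p : ℕ) (hm : 1 ≤ m) (hp : 1 ≤ p) :
    Module.finrank F (Submodule.span F (Om F m p))
    = ((p - 1) * (2 * m ^ 2 - m + 1) - chi m * chi p) / 2 := by
  classical
  rcases Nat.lt_or_ge p 2 with hp1 | hp2
  · -- p = 1
    have hp' : p = 1 := by omega
    subst hp'
    have hset : Om F m 1 = (∅ : Set (Polynomial F)) := by
      ext g
      simp only [Om, Set.mem_setOf_eq, Set.mem_empty_iff_false, iff_false]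
      rintro ⟨k, s, t, ht1, ht2, -⟩
      omega
    rw [hset, Submodule.span_empty, finrank_bot]
    simp [chi]
  · -- main case
    set V : Finset ℕ := (Finset.range (m ^ 2 + 1) ×ˢ Finset.range (p - 1)).image (encp p) with hV
    set D : Finset ℕ := V.filter (fun n => ¬ rep m p n = n) with hD
    have hVmem : ∀ n, n ∈ V ↔ ∃ q r, q ≤ m ^ 2 ∧ r ≤ p - 2 ∧ n = q * p + r :=
      fun n => mem_V_iff hp2 n
    -- the independent family
    have hkey : ∀ n ∈ V, (X : Polynomial F) ^ n - X ^ (rep m p n) ∈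
        Submodule.span F (Set.range (fun i : {x // x ∈ D} =>
          (X : Polynomial F) ^ (i : ℕ) - X ^ (rep m p (i : ℕ)))) := by
      intro n hn
      by_cases h : rep m p n = n
      · rw [h, sub_self]; exact Submodule.zero_mem _
      · exact Submodule.subset_span ⟨⟨n, by rw [hD, Finset.mem_filter]; exact ⟨hn, h⟩⟩, rfl⟩
    have hspan : Submodule.span F (Om F m p) =
        Submodule.span F (Set.range (fun i : {x // x ∈ D} =>
          (X : Polynomial F) ^ (i : ℕ) - X ^ (rep m p (i : ℕ)))) := by
      apply le_antisymm
      · rw [Submodule.span_le]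
        rintro g ⟨k, s, t, ht1, ht2, rfl⟩
        rw [expA hp2 ht1 ht2, expB]
        have hsm : (s : ℕ) < m := s.isLt
        have hkm : (k : ℕ) < m := k.isLt
        have haV : ((s : ℕ) * m + k + 1) * p + (t - 1) ∈ V := by
          rw [hVmem]
          exact ⟨_, _, quot_le hsm hkm, by omega, rfl⟩
        have hbV : ((k : ℕ) * m + s) * p + (p - 1 - t) ∈ V := by
          rw [hVmem]
          refine ⟨_, _, ?_, by omega, rfl⟩
          have := quot_le hkm hsm
          omega
        have hrepeq := rep_edge (m := m) (p := p) hm hp2 hsm hkm ht1 ht2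
        have hdecomp : (X : Polynomial F) ^ (((s : ℕ) * m + k + 1) * p + (t - 1))
            - X ^ (((k : ℕ) * m + s) * p + (p - 1 - t))
            = ((X : Polynomial F) ^ (((s : ℕ) * m + k + 1) * p + (t - 1))
                - X ^ (rep m p (((s : ℕ) * m + k + 1) * p + (t - 1))))
              - ((X : Polynomial F) ^ (((k : ℕ) * m + s) * p + (p - 1 - t))
                - X ^ (rep m p (((k : ℕ) * m + s) * p + (p - 1 - t)))) := by
          rw [hrepeq]; ring
        rw [hdecomp]
        exact Submodule.sub_mem _ (hkey _ haV) (hkey _ hbV)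
      · rw [Submodule.span_le]
        rintro g ⟨⟨n, hn⟩, rfl⟩
        have hnV : n ∈ V := (Finset.mem_filter.mp (by rwa [hD] at hn)).1
        obtain ⟨q, r, hq, hr, rfl⟩ := (hVmem n).mp hnV
        exact rep_connect hm hp2 hq hr
    have hli : LinearIndependent F (fun i : {x // x ∈ D} =>
        (X : Polynomial F) ^ (i : ℕ) - X ^ (rep m p (i : ℕ))) := by
      rw [linearIndependent_iff']
      intro sfin g hsum i hi
      have hiD : (i : ℕ) ∈ D := i.2
      have hirep : ¬ rep m p (i : ℕ) = (i : ℕ) := (Finset.mem_filter.mp hiD).2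
      have h0 := congrArg (fun q => Polynomial.coeff q (i : ℕ)) hsum
      simp only [Polynomial.finset_sum_coeff, Polynomial.coeff_smul, Polynomial.coeff_sub,
        Polynomial.coeff_X_pow, Polynomial.coeff_zero, smul_eq_mul] at h0
      rw [Finset.sum_eq_single i] at h0
      · rw [if_pos rfl, if_neg (fun hcon : (i : ℕ) = rep m p (i : ℕ) => hirep hcon.symm)] at h0
        simpa using h0
      · intro j hj hji
        have hjD : (j : ℕ) ∈ D := j.2
        have hjV : (j : ℕ) ∈ V := (Finset.mem_filter.mp hjD).1
        obtain ⟨qj, rj, hqj, hrj, hej⟩ := (hVmem _).mp hjV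
        have hne1 : ¬ ((i : ℕ) = (j : ℕ)) := fun hcon => hji (Subtype.ext hcon.symm)
        have hne2 : ¬ ((i : ℕ) = rep m p (j : ℕ)) := by
          intro hcon
          have hidem : rep m p (rep m p (j : ℕ)) = rep m p (j : ℕ) := by
            rw [hej]; exact rep_idem hm hp2 hrj
          rw [← hcon] at hidem
          exact hirep hidem
        rw [if_neg hne1, if_neg hne2]
        ring
      · exact fun hcon => absurd hi hcon
    have hOm : Module.finrank F (Submodule.span F (Om F m p)) = D.card := by
      rw [hspan, finrank_span_eq_card hli, Fintype.card_coe]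
    rw [hOm]
    -- counting
    set Cm : Finset (ℕ × ℕ) := (Finset.range (m + 1) ×ˢ Finset.range (p - 1)).filter
      (fun cr => encp p cr ≤ encp p (flp m p cr)) with hCm
    have hFixeq : V.filter (fun n => rep m p n = n) = Cm.image (encp p) := by
      apply Finset.ext
      intro n
      rw [Finset.mem_filter]
      constructor
      · rintro ⟨hnV, hfix⟩
        obtain ⟨q, r, hq, hr, rfl⟩ := (hVmem n).mp hnV
        rw [rep_eval (by omega)] at hfix
        have hcle : q % (m + 1) ≤ q := Nat.mod_le _ _
        have hcm : q % (m + 1) ≤ m := Nat.lt_succ_iff.mp (Nat.mod_lt _ (by omega))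
        have hu : q % (m + 1) * p + r ≤ q * p + r :=
          Nat.add_le_add_right (Nat.mul_le_mul_right p hcle) r
        have hge : q * p + r ≤ q % (m + 1) * p + r := by
          rw [← hfix]; exact min_le_left _ _
        have hueq : q % (m + 1) * p + r = q * p + r := le_antisymm hu hge
        have hcq : q % (m + 1) = q := (enc_inj (by omega) (by omega) hueq).1
        have hmineq : min (q % (m + 1) * p + r) (iot m (q % (m + 1)) * p + (p - 2 - r))
            = q % (m + 1) * p + r := by rw [hfix, hueq]
        have huv := min_eq_left_iff.mp hmineq
        rw [hcq] at huv
        refine Finset.mem_image.mpr ⟨(q, r), ?_, rfl⟩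
        rw [hCm, Finset.mem_filter, Finset.mem_product, Finset.mem_range, Finset.mem_range]
        refine ⟨⟨by omega, by omega⟩, ?_⟩
        simpa only [encp, flp] using huv
      · intro h
        obtain ⟨⟨c, r⟩, hmem, rfl⟩ := Finset.mem_image.mp h
        rw [hCm, Finset.mem_filter, Finset.mem_product, Finset.mem_range, Finset.mem_range] at hmem
        obtain ⟨⟨hc1, hr1⟩, hcond⟩ := hmem
        have hmm2 : m ≤ m ^ 2 := Nat.le_self_pow (by norm_num) m
        simp only [encp, flp] at hcond
        have hcV : encp p (c, r) ∈ V := (hVmem _).mpr ⟨c, r, by omega, by omega, rfl⟩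
        refine ⟨hcV, ?_⟩
        show rep m p (c * p + r) = c * p + r
        rw [rep_eval (by omega), Nat.mod_eq_of_lt (by omega : c < m + 1)]
        exact min_eq_left hcond
    have hFixcard : (V.filter (fun n => rep m p n = n)).card = Cm.card := by
      rw [hFixeq]
      apply Finset.card_image_of_injOn
      intro x hx y hy hxy
      have hx' := Finset.mem_coe.mp hx
      have hy' := Finset.mem_coe.mp hy
      rw [hCm, Finset.mem_filter, Finset.mem_product, Finset.mem_range, Finset.mem_range] at hx' hy'
      simp only [encp] at hxy
      obtain ⟨h1, h2⟩ := enc_inj (by omega) (by omega) hxy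
      exact Prod.ext h1 h2
    have hcard1 : (V.filter (fun n => rep m p n = n)).card + D.card = V.card := by
      rw [hD]
      exact Finset.card_filter_add_card_filter_not _
    have hVcard : V.card = (m ^ 2 + 1) * (p - 1) := by
      rw [hV, Finset.card_image_of_injOn, Finset.card_product, Finset.card_range,
        Finset.card_range]
      intro x hx y hy hxy
      have hx' := Finset.mem_coe.mp hx
      have hy' := Finset.mem_coe.mp hy
      rw [Finset.mem_product, Finset.mem_range, Finset.mem_range] at hx' hy'
      simp only [encp] at hxy
      obtain ⟨h1, h2⟩ := enc_inj (by omega) (by omega) hxy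
      exact Prod.ext h1 h2
    have hcmin := count_min m p hm hp2
    rw [← hCm] at hcmin
    -- final arithmetic
    have hmm2 : m ≤ m ^ 2 := Nat.le_self_pow (by norm_num) m
    obtain ⟨dd, hdd⟩ : ∃ dd, m ^ 2 = m + dd := ⟨m ^ 2 - m, by omega⟩
    have e1 : (p - 1) * (2 * m ^ 2 - m + 1) = m ^ 2 * (p - 1) + dd * (p - 1) + (p - 1) := by
      have h2 : 2 * m ^ 2 - m + 1 = m ^ 2 + dd + 1 := by omega
      rw [h2, hdd]
      ring
    have e2 : (m ^ 2 + 1) * (p - 1) = m ^ 2 * (p - 1) + (p - 1) := by ring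
    have e3 : (m + 1) * (p - 1) = m * (p - 1) + (p - 1) := by ring
    have e4 : m * (p - 1) + dd * (p - 1) = m ^ 2 * (p - 1) := by rw [hdd]; ring
    have hchi := chi_mul_le_one m p
    rw [e1]
    omega

end Main

theorem stmt_10 (F : Type*) [Field F] (m p : ℕ) (hm : 1 ≤ m) (hp : 1 ≤ p) :
    Module.finrank F (Submodule.span F
      { q : Polynomial F | ∃ k s : Fin m, ∃ t : ℕ, 1 ≤ t ∧ t ≤ p - 1 ∧
          q = (X : Polynomial F) ^ ((s : ℕ) * (m * p) + (k : ℕ) * p + (p - 1) + t)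
              - (X : Polynomial F) ^ ((k : ℕ) * (m * p) + (s : ℕ) * p + (p - 1 - t)) })
    = ((p - 1) * (2 * m ^ 2 - m + 1) - chi m * chi p) / 2 :=
  stmt_10' F m p hm hp
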